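/- Graph reducibility in terms of cut weights is equivalent to graph reducibility in terms of Lovász extensions: for a submodular hypergraph H on vertex set V (|V| = N) with cut function cut_H(S) = Σ_e w_e(S) and a directed graph G on V ∪ V̄ (|V̄| = M) with non-negative adjacency weights A and cut function cut_G(S) = Σ_{u∈S, v∉S} A_{uv}, the condition cut_H(S) = min_{T⊆V̄} cut_G(S∪T) for all S ⊆ V holds if and only if Q_1(x) = min_{x̄∈ℝ^M} Q_1^{(g)}(x, x̄) for all x ∈ ℝ^N, where Q_1 is the Lovász extension of cut_H and Q_1^{(g)}(y) = Σ_{u,v} A_{uv} max{y_u − y_v, 0}. -/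

import Mathlib

open scoped Classical
open MeasureTheory

/-- The Lovász extension of a set function `F` (with `F ∅ = 0`), defined equivalently to the
sorted telescoping sum via the level-set integral formula. -/
noncomputable def lovasz {α : Type*} [Fintype α] (F : Set α → ℝ) (x : α → ℝ) : ℝ :=
  (⨅ i, x i) * F Set.univ +
    ∫ t in Set.Ioc (⨅ i, x i) (⨆ i, x i), F {i | t < x i}

/-- `F(S₁) + F(S₂) ≥ F(S₁ ∪ S₂) + F(S₁ ∩ S₂)`. -/
def Submodular {α : Type*} (F : Set α → ℝ) : Prop :=
  ∀ A B : Set α, F (A ∪ B) + F (A ∩ B) ≤ F A + F B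

section Aux

lemma level_measurable {α : Type*} [Fintype α] (F : Set α → ℝ) (y : α → ℝ) :
    Measurable (fun t : ℝ => F {i | t < y i}) := by
  classical
  have hrep : (fun t : ℝ => F {i | t < y i}) =
      fun t => ∑ s : Finset α,
        Set.indicator {t : ℝ | ∀ i, (t < y i ↔ i ∈ s)} (fun _ => F ↑s) t := by
    funext t
    rw [Finset.sum_eq_single (Finset.univ.filter (fun i => t < y i))]
    · rw [Set.indicator_of_mem]
      · congr 1; ext i; simp
      · intro i; simp
    · intro s _ hs
      rw [Set.indicator_of_notMem]
      intro hmem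
      apply hs
      ext i
      simp [← hmem i]
    · intro h; exact absurd (Finset.mem_univ _) h
  rw [hrep]
  apply Finset.measurable_sum
  intro s _
  apply Measurable.indicator measurable_const
  have : {t : ℝ | ∀ i, (t < y i ↔ i ∈ s)} = ⋂ i, {t : ℝ | t < y i ↔ i ∈ s} := by
    ext t; simp
  rw [this]
  apply MeasurableSet.iInter
  intro i
  by_cases hi : i ∈ s
  · have : {t : ℝ | t < y i ↔ i ∈ s} = Set.Iio (y i) := by ext t; simp [hi]
    rw [this]; exact measurableSet_Iio
  · have : {t : ℝ | t < y i ↔ i ∈ s} = Set.Ici (y i) := by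
      ext t; simp [hi, not_lt]
    rw [this]; exact measurableSet_Ici

lemma level_integrableOn {α : Type*} [Fintype α] (F : Set α → ℝ) (y : α → ℝ) (c d : ℝ) :
    MeasureTheory.IntegrableOn (fun t : ℝ => F {i | t < y i}) (Set.Ioc c d) := by
  classical
  apply Measure.integrableOn_of_bounded (M := ∑ s : Finset α, ‖F ↑s‖)
    measure_Ioc_lt_top.ne ((level_measurable F y).aestronglyMeasurable)
  apply Filter.Eventually.of_forall
  intro t
  have h1 : {i | t < y i} = ↑(Finset.univ.filter (fun i => t < y i)) := by ext i; simp
  rw [h1]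
  exact Finset.single_le_sum (f := fun s : Finset α => ‖F (↑s : Set α)‖)
    (fun _ _ => norm_nonneg _) (Finset.mem_univ _)

lemma integral_if_band (C : ℝ) (a b c d : ℝ) (hca : c ≤ a) (hbd : b ≤ d) :
    ∫ t in Set.Ioc c d, (if t < b ∧ ¬ t < a then C else 0) = C * max (b - a) 0 := by
  have h1 : (fun t : ℝ => if t < b ∧ ¬ t < a then C else 0) =
      Set.indicator (Set.Ico a b) (fun _ => C) := by
    funext t
    by_cases h : t < b ∧ ¬ t < a
    · rw [if_pos h, Set.indicator_of_mem (Set.mem_Ico.2 ⟨not_lt.1 h.2, h.1⟩)]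
    · rw [if_neg h, Set.indicator_of_notMem]
      intro hm
      obtain ⟨h1', h2'⟩ := Set.mem_Ico.1 hm
      exact h ⟨h2', not_lt.2 h1'⟩
  rw [h1, MeasureTheory.setIntegral_indicator measurableSet_Ico, setIntegral_const]
  have h2 : volume (Set.Ioc c d ∩ Set.Ico a b) = volume (Set.Ioc c d ∩ Set.Ioc a b) := by
    apply measure_congr
    exact (Filter.EventuallyEq.refl _ _).inter Ico_ae_eq_Ioc
  rw [measureReal_def, h2, Set.Ioc_inter_Ioc, Real.volume_Ioc, max_eq_right hca, min_eq_right hbd,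
    smul_eq_mul, mul_comm, ENNReal.toReal_ofReal']

lemma band_integrableOn (C : ℝ) (a b c d : ℝ) :
    MeasureTheory.IntegrableOn (fun t : ℝ => if t < b ∧ ¬ t < a then C else 0)
      (Set.Ioc c d) := by
  apply Measure.integrableOn_of_bounded (M := ‖C‖) measure_Ioc_lt_top.ne
  · apply Measurable.aestronglyMeasurable
    apply Measurable.ite _ measurable_const measurable_const
    exact (measurableSet_Iio.inter measurableSet_Iio.compl)
  · apply Filter.Eventually.of_forall
    intro t
    split_ifs <;> simp

lemma sum_max_eq_integral {γ : Type*} [Fintype γ] (A : γ → γ → ℝ) (y : γ → ℝ)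
    (c d : ℝ) (hy : ∀ i, y i ∈ Set.Icc c d) :
    ∑ u, ∑ v, A u v * max (y u - y v) 0 =
      ∫ t in Set.Ioc c d,
        ∑ u, ∑ v, if u ∈ {i | t < y i} ∧ v ∉ {i | t < y i} then A u v else 0 := by
  have hint : ∀ u v : γ, MeasureTheory.IntegrableOn
      (fun t : ℝ => if t < y u ∧ ¬ t < y v then A u v else 0) (Set.Ioc c d) :=
    fun u v => band_integrableOn _ _ _ _ _
  have h0 : ∀ t : ℝ, ∀ u v : γ,
      (if u ∈ {i | t < y i} ∧ v ∉ {i | t < y i} then A u v else 0)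
        = (if t < y u ∧ ¬ t < y v then A u v else 0) := by
    intro t u v
    congr 1
  have hswap : (∫ t in Set.Ioc c d,
        (∑ u, ∑ v, if u ∈ {i | t < y i} ∧ v ∉ {i | t < y i} then A u v else 0 : ℝ))
      = ∑ u, ∑ v, ∫ t in Set.Ioc c d, (if t < y u ∧ ¬ t < y v then A u v else 0) := by
    simp only [h0]
    rw [MeasureTheory.integral_finset_sum]
    · exact Finset.sum_congr rfl (fun u _ => MeasureTheory.integral_finset_sum _
        (fun v _ => hint u v))
    · intro u _
      exact integrable_finset_sum _ (fun v _ => hint u v)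
  rw [hswap]
  apply Finset.sum_congr rfl; intro u _
  apply Finset.sum_congr rfl; intro v _
  rw [integral_if_band _ _ _ _ _ (hy v).1 (hy u).2]

lemma ae_ne_real (r : ℝ) : ∀ᵐ t : ℝ, t ≠ r := by
  have h : (volume : Measure ℝ) {r} = 0 := measure_singleton r
  exact (MeasureTheory.compl_mem_ae_iff).2 h

lemma lovasz_indicator {α : Type*} [Fintype α] (F : Set α → ℝ)
    (h0 : F ∅ = 0) (hu : F Set.univ = 0) (S : Set α) :
    lovasz F (fun a => if a ∈ S then (1:ℝ) else 0) = F S := by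
  classical
  set y : α → ℝ := fun a => if a ∈ S then (1:ℝ) else 0 with hy
  by_cases hSu : S = Set.univ
  · subst hSu
    have hy1 : y = fun _ => (1:ℝ) := by funext a; simp [hy]
    rw [lovasz, hy1, hu]
    rcases isEmpty_or_nonempty α with h | h
    · simp
    · simp [ciInf_const, ciSup_const]
  by_cases hSe : S = ∅
  · subst hSe
    have hy1 : y = fun _ => (0:ℝ) := by funext a; simp [hy]
    rw [lovasz, hy1, hu, h0]
    rcases isEmpty_or_nonempty α with h | h
    · simp
    · simp [ciInf_const, ciSup_const]
  · obtain ⟨a1, ha1⟩ := Set.nonempty_iff_ne_empty.2 hSe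
    obtain ⟨a0, ha0⟩ : ∃ a, a ∉ S := by
      by_contra h
      push_neg at h
      exact hSu (Set.eq_univ_of_forall h)
    haveI : Nonempty α := ⟨a1⟩
    have hbdd_lo : BddBelow (Set.range y) := (Set.finite_range y).bddBelow
    have hbdd_hi : BddAbove (Set.range y) := (Set.finite_range y).bddAbove
    have hinf : (⨅ i, y i) = 0 := by
      apply le_antisymm
      · have := ciInf_le hbdd_lo a0
        simpa [hy, ha0] using this
      · apply le_ciInf
        intro a
        by_cases h : a ∈ S <;> simp [hy, h]
    have hsup : (⨆ i, y i) = 1 := by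
      apply le_antisymm
      · apply ciSup_le
        intro a
        by_cases h : a ∈ S <;> simp [hy, h]
      · have := le_ciSup hbdd_hi a1
        simpa [hy, ha1] using this
    rw [lovasz, hinf, hsup, hu, mul_zero, zero_add]
    have hcongr : ∀ᵐ t : ℝ, t ∈ Set.Ioc (0:ℝ) 1 → F {i | t < y i} = F S := by
      filter_upwards [ae_ne_real 1] with t ht1 ht
      have : {i | t < y i} = S := by
        ext i
        by_cases h : i ∈ S <;>
          simp [hy, h, lt_of_le_of_ne ht.2 ht1, not_lt.2 (le_of_lt ht.1)]
      rw [this]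
    rw [MeasureTheory.setIntegral_congr_ae measurableSet_Ioc hcongr, setIntegral_const]
    simp

noncomputable def clampTo (c d r : ℝ) : ℝ := max c (min d r)

lemma clampTo_mem (c d : ℝ) (h : c ≤ d) (r : ℝ) : clampTo c d r ∈ Set.Icc c d :=
  ⟨le_max_left _ _, max_le h (min_le_left _ _)⟩

lemma clampTo_of_mem {c d r : ℝ} (hr : r ∈ Set.Icc c d) : clampTo c d r = r := by
  rw [clampTo, min_eq_right hr.2, max_eq_right hr.1]

lemma clampTo_max_diff (c d s t : ℝ) :
    max (clampTo c d s - clampTo c d t) 0 ≤ max (s - t) 0 := by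
  rcases le_total s t with h | h
  · apply max_le _ (le_max_right _ _)
    have h1 : clampTo c d s ≤ clampTo c d t :=
      max_le_max le_rfl (min_le_min le_rfl h)
    have h2 : (0:ℝ) ≤ max (s-t) 0 := le_max_right _ _
    linarith
  · apply max_le _ (le_max_right _ _)
    have h1 : clampTo c d s - clampTo c d t ≤ s - t := by
      rw [clampTo, clampTo]
      rcases le_total s d with h1 | h1 <;> rcases le_total t d with h2 | h2 <;>
        rcases le_total c s with h3 | h3 <;> rcases le_total c t with h4 | h4 <;>
        simp [max_def, min_def] <;> split_ifs <;> linarith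
    exact le_trans h1 (le_max_left _ _)

lemma cut_submodular {γ : Type*} [Fintype γ] (A : γ → γ → ℝ) (hA : ∀ u v, 0 ≤ A u v)
    (U V : Set γ) :
    (∑ u, ∑ v, if u ∈ U ∪ V ∧ v ∉ U ∪ V then A u v else 0) +
      (∑ u, ∑ v, if u ∈ U ∩ V ∧ v ∉ U ∩ V then A u v else 0) ≤
    (∑ u, ∑ v, if u ∈ U ∧ v ∉ U then A u v else 0) +
      (∑ u, ∑ v, if u ∈ V ∧ v ∉ V then A u v else 0) := by
  rw [← Finset.sum_add_distrib, ← Finset.sum_add_distrib]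
  apply Finset.sum_le_sum
  intro u _
  rw [← Finset.sum_add_distrib, ← Finset.sum_add_distrib]
  apply Finset.sum_le_sum
  intro v _
  by_cases hu1 : u ∈ U <;> by_cases hu2 : u ∈ V <;>
    by_cases hv1 : v ∈ U <;> by_cases hv2 : v ∈ V <;>
    simp [hu1, hu2, hv1, hv2, hA u v]

lemma cut_submodular_fn {γ : Type*} [Fintype γ] (A : γ → γ → ℝ) (hA : ∀ u v, 0 ≤ A u v)
    (g : Set γ → ℝ)
    (hg : ∀ U, g U = ∑ u, ∑ v, if u ∈ U ∧ v ∉ U then A u v else 0) (U V : Set γ) :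
    g (U ∪ V) + g (U ∩ V) ≤ g U + g V := by
  rw [hg, hg, hg, hg]
  rw [← Finset.sum_add_distrib, ← Finset.sum_add_distrib]
  apply Finset.sum_le_sum
  intro u _
  rw [← Finset.sum_add_distrib, ← Finset.sum_add_distrib]
  apply Finset.sum_le_sum
  intro v _
  by_cases hu1 : u ∈ U <;> by_cases hu2 : u ∈ V <;>
    by_cases hv1 : v ∈ U <;> by_cases hv2 : v ∈ V <;>
    simp [hu1, hu2, hv1, hv2, hA u v]

lemma exists_canonical_min {β : Type*} [Finite β] (g : Set β → ℝ)
    (hsub : ∀ T T' : Set β, g (T ∪ T') + g (T ∩ T') ≤ g T + g T') :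
    ∃ T0 : Set β, (∀ T, g T0 ≤ g T) ∧ ∀ T, (∀ T', g T ≤ g T') → T0 ⊆ T := by
  classical
  obtain ⟨Tb, hTb⟩ := Finite.exists_min g
  haveI : Nonempty {T : Set β // ∀ T', g T ≤ g T'} := ⟨⟨Tb, hTb⟩⟩
  obtain ⟨T0, hT0⟩ := Finite.exists_min
    (fun T : {T : Set β // ∀ T', g T ≤ g T'} => (T.1.ncard))
  refine ⟨T0.1, T0.2, ?_⟩
  intro T hT
  have hmin : ∀ T', g (T0.1 ∩ T) ≤ g T' := by
    intro T'
    have h1 := hsub T0.1 T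
    have h2 : g T ≤ g (T0.1 ∪ T) := hT _
    have h3 : g (T0.1 ∩ T) ≤ g T0.1 := by linarith
    exact le_trans h3 (T0.2 T')
  have hcard := hT0 ⟨T0.1 ∩ T, hmin⟩
  have heq : T0.1 ∩ T = T0.1 :=
    Set.eq_of_subset_of_ncard_le Set.inter_subset_left hcard (Set.toFinite _)
  rw [← heq]
  exact Set.inter_subset_right

lemma mem_glue_iff {α β : Type*} (S : Set α) (T : Set β) (i : α ⊕ β) :
    i ∈ Sum.inl '' S ∪ Sum.inr '' T ↔ Sum.elim (· ∈ S) (· ∈ T) i := by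
  cases i <;> simp

lemma glue_union {α β : Type*} (S S' : Set α) (T T' : Set β) :
    (Sum.inl '' S ∪ Sum.inr '' T) ∪ (Sum.inl '' S' ∪ Sum.inr '' T') =
      Sum.inl '' (S ∪ S') ∪ Sum.inr '' (T ∪ T') := by
  ext i
  simp only [Set.mem_union, mem_glue_iff]
  cases i <;> simp [mem_glue_iff]

lemma glue_inter {α β : Type*} (S S' : Set α) (T T' : Set β) :
    (Sum.inl '' S ∪ Sum.inr '' T) ∩ (Sum.inl '' S' ∪ Sum.inr '' T') =
      Sum.inl '' (S ∩ S') ∪ Sum.inr '' (T ∩ T') := by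
  ext i
  simp only [Set.mem_inter_iff, mem_glue_iff]
  cases i <;> simp [mem_glue_iff]

lemma level_elim {α β : Type*} (x : α → ℝ) (z : β → ℝ) (t : ℝ) :
    {i : α ⊕ β | t < Sum.elim x z i} =
      Sum.inl '' {a | t < x a} ∪ Sum.inr '' {b | t < z b} := by
  ext i
  rw [mem_glue_iff]
  cases i <;> simp

end Aux

/-- Graph reducibility in terms of cut weights is equivalent to graph reducibility in terms of
Lovász extensions: for a submodular hypergraph on `α` with splitting functions `w i` and a
directed graph on `α ⊕ β` with non-negative weights `A`, the condition
`cut_H(S) = min_{T ⊆ V̄} cut_G(S ∪ T)` for all `S` holds iff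
`Q₁(x) = min_{x̄} Q₁⁽ᵍ⁾(x, x̄)` for all `x`. -/
theorem stmt_12 {α β ι : Type*} [Fintype α] [Fintype β] [Fintype ι]
    (e : ι → Set α) (w : ι → Set α → ℝ)
    (hsub : ∀ i, Submodular (w i)) (h0 : ∀ i, w i ∅ = 0)
    (hnn : ∀ i S, 0 ≤ w i S)
    (hrestr : ∀ i S, w i S = w i (S ∩ e i))
    (hsym : ∀ i, ∀ S ⊆ e i, w i S = w i (e i \ S))
    (A : (α ⊕ β) → (α ⊕ β) → ℝ) (hA : ∀ u v, 0 ≤ A u v) :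
    let cutH : Set α → ℝ := fun S => ∑ i, w i S
    let cutG : Set (α ⊕ β) → ℝ := fun S => ∑ u, ∑ v, if u ∈ S ∧ v ∉ S then A u v else 0
    let Q1g : ((α ⊕ β) → ℝ) → ℝ := fun y => ∑ u, ∑ v, A u v * max (y u - y v) 0
    ((∀ S : Set α, cutH S = ⨅ T : Set β, cutG (Sum.inl '' S ∪ Sum.inr '' T)) ↔
      (∀ x : α → ℝ, lovasz cutH x = ⨅ xb : β → ℝ, Q1g (Sum.elim x xb))) := by
  classical
  intro cutH cutG Q1g
  -- basic facts
  have hGnn : ∀ U : Set (α ⊕ β), 0 ≤ cutG U := by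
    intro U
    apply Finset.sum_nonneg; intro u _
    apply Finset.sum_nonneg; intro v _
    by_cases h : u ∈ U ∧ v ∉ U <;> simp [h, hA u v]
  have hQnn : ∀ y : (α ⊕ β) → ℝ, 0 ≤ Q1g y := by
    intro y
    apply Finset.sum_nonneg; intro u _
    apply Finset.sum_nonneg; intro v _
    exact mul_nonneg (hA u v) (le_max_right _ _)
  have hbddG : ∀ S : Set α,
      BddBelow (Set.range fun T : Set β => cutG (Sum.inl '' S ∪ Sum.inr '' T)) := by
    intro S
    refine ⟨0, ?_⟩
    rintro r ⟨T, rfl⟩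
    exact hGnn _
  have hbddQ : ∀ x : α → ℝ,
      BddBelow (Set.range fun xb : β → ℝ => Q1g (Sum.elim x xb)) := by
    intro x
    refine ⟨0, ?_⟩
    rintro r ⟨xb, rfl⟩
    exact hQnn _
  have hHu : cutH Set.univ = 0 := by
    apply Finset.sum_eq_zero
    intro i _
    rw [hrestr i Set.univ, Set.univ_inter, hsym i (e i) subset_rfl, Set.diff_self, h0]
  have hHe : cutH ∅ = 0 := by
    apply Finset.sum_eq_zero
    intro i _
    exact h0 i
  -- Q1g as a level-set integral
  have Qint : ∀ (c d : ℝ) (y : (α ⊕ β) → ℝ), (∀ i, y i ∈ Set.Icc c d) →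
      Q1g y = ∫ t in Set.Ioc c d, cutG {i | t < y i} :=
    fun c d y hy => sum_max_eq_integral A y c d hy
  -- clamping decreases Q1g
  have clampQ : ∀ (c d : ℝ) (y : (α ⊕ β) → ℝ),
      Q1g (fun i => clampTo c d (y i)) ≤ Q1g y := by
    intro c d y
    apply Finset.sum_le_sum; intro u _
    apply Finset.sum_le_sum; intro v _
    exact mul_le_mul_of_nonneg_left (clampTo_max_diff c d (y u) (y v)) (hA u v)
  -- Q1g on 0/1 vectors
  have Qind : ∀ (S : Set α) (T : Set β),
      Q1g (Sum.elim (fun a => if a ∈ S then (1:ℝ) else 0)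
        (fun b => if b ∈ T then (1:ℝ) else 0)) = cutG (Sum.inl '' S ∪ Sum.inr '' T) := by
    intro S T
    apply Finset.sum_congr rfl; intro u _
    apply Finset.sum_congr rfl; intro v _
    set U := Sum.inl '' S ∪ Sum.inr '' T with hU
    have hval : ∀ i : α ⊕ β, Sum.elim (fun a => if a ∈ S then (1:ℝ) else 0)
        (fun b => if b ∈ T then (1:ℝ) else 0) i = if i ∈ U then (1:ℝ) else 0 := by
      intro i
      cases i <;> simp [hU, mem_glue_iff]
    rw [hval u, hval v]
    by_cases hu : u ∈ U <;> by_cases hv : v ∈ U <;> simp [hu, hv]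
  constructor
  · -- cut-level reduction implies Lovász-level reduction
    intro hcut x
    rcases isEmpty_or_nonempty α with hα | hα
    · have hlov : lovasz cutH x = 0 := by
        rw [lovasz, Real.iInf_of_isEmpty, Real.iSup_of_isEmpty]
        simp
      rw [hlov]
      have hz : Q1g (Sum.elim x (fun _ => (0:ℝ))) = 0 := by
        apply Finset.sum_eq_zero; intro u _
        apply Finset.sum_eq_zero; intro v _
        cases u with
        | inl a => exact (hα.false a).elim
        | inr b =>
          cases v with
          | inl a => exact (hα.false a).elim
          | inr b' => simp
      exact le_antisymm (le_ciInf fun xb => hQnn _) (hz ▸ ciInf_le (hbddQ x) _)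
    · set c := ⨅ a, x a with hc
      set d := ⨆ a, x a with hd
      have hbl : BddBelow (Set.range x) := (Set.finite_range x).bddBelow
      have hbh : BddAbove (Set.range x) := (Set.finite_range x).bddAbove
      have hxm : ∀ a, x a ∈ Set.Icc c d := fun a => ⟨ciInf_le hbl a, le_ciSup hbh a⟩
      obtain ⟨a₀⟩ := id hα
      have hcd : c ≤ d := le_trans (hxm a₀).1 (hxm a₀).2
      have hlov : lovasz cutH x = ∫ t in Set.Ioc c d, cutH {a | t < x a} := by
        rw [lovasz, hHu, mul_zero, zero_add]
      apply le_antisymm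
      · apply le_ciInf
        intro xb
        set y' : (α ⊕ β) → ℝ := fun i => clampTo c d (Sum.elim x xb i) with hy'
        have hy'm : ∀ i, y' i ∈ Set.Icc c d := fun i => clampTo_mem c d hcd _
        have hy'e : y' = Sum.elim x (fun b => clampTo c d (xb b)) := by
          funext i
          cases i with
          | inl a => exact clampTo_of_mem (hxm a)
          | inr b => rfl
        have hmono : ∀ t ∈ Set.Ioc c d, cutH {a | t < x a} ≤ cutG {i | t < y' i} := by
          intro t _
          rw [hy'e, level_elim, hcut {a | t < x a}]
          exact ciInf_le (hbddG _) _
        calc lovasz cutH x = ∫ t in Set.Ioc c d, cutH {a | t < x a} := hlov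
          _ ≤ ∫ t in Set.Ioc c d, cutG {i | t < y' i} :=
              setIntegral_mono_on (level_integrableOn cutH x c d)
                (level_integrableOn cutG y' c d) measurableSet_Ioc hmono
          _ = Q1g y' := (Qint c d y' hy'm).symm
          _ ≤ Q1g (Sum.elim x xb) := clampQ c d _
      · have hGsub : ∀ U V : Set (α ⊕ β), cutG (U ∪ V) + cutG (U ∩ V) ≤ cutG U + cutG V :=
          cut_submodular_fn A hA cutG (fun U => rfl)
        have hJ : ∀ S : Set α, ∃ T0 : Set β,
            (∀ T, cutG (Sum.inl '' S ∪ Sum.inr '' T0) ≤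
              cutG (Sum.inl '' S ∪ Sum.inr '' T)) ∧
            ∀ T, (∀ T', cutG (Sum.inl '' S ∪ Sum.inr '' T) ≤
              cutG (Sum.inl '' S ∪ Sum.inr '' T')) → T0 ⊆ T := by
          intro S
          apply exists_canonical_min
          intro T T'
          have hthis := hGsub (Sum.inl '' S ∪ Sum.inr '' T) (Sum.inl '' S ∪ Sum.inr '' T')
          rw [glue_union, glue_inter, Set.union_self, Set.inter_self] at hthis
          exact hthis
        choose Tm hTm1 hTm2 using hJ
        have hTmono : ∀ S S' : Set α, S ⊆ S' → Tm S ⊆ Tm S' := by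
          intro S S' hSS
          have hkey := hGsub (Sum.inl '' S' ∪ Sum.inr '' (Tm S'))
            (Sum.inl '' S ∪ Sum.inr '' (Tm S))
          rw [glue_union, glue_inter, Set.union_eq_self_of_subset_right hSS,
            Set.inter_eq_self_of_subset_right hSS] at hkey
          have h1 : cutG (Sum.inl '' S' ∪ Sum.inr '' (Tm S')) ≤
              cutG (Sum.inl '' S' ∪ Sum.inr '' (Tm S' ∪ Tm S)) := hTm1 S' _
          have h2 : cutG (Sum.inl '' S ∪ Sum.inr '' (Tm S' ∩ Tm S)) ≤
              cutG (Sum.inl '' S ∪ Sum.inr '' (Tm S)) := by linarith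
          have h3 : ∀ T', cutG (Sum.inl '' S ∪ Sum.inr '' (Tm S' ∩ Tm S)) ≤
              cutG (Sum.inl '' S ∪ Sum.inr '' T') := fun T' => le_trans h2 (hTm1 S T')
          exact (hTm2 S _ h3).trans Set.inter_subset_left
        set xbs : β → ℝ := fun b =>
          sSup ({c} ∪ {t | t ∈ Set.Icc c d ∧ b ∈ Tm {a | t < x a}}) with hxbs
        have hsetne : ∀ b : β,
            ({c} ∪ {t | t ∈ Set.Icc c d ∧ b ∈ Tm {a | t < x a}} : Set ℝ).Nonempty :=
          fun b => ⟨c, Or.inl rfl⟩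
        have hsetbdd : ∀ b : β,
            BddAbove ({c} ∪ {t | t ∈ Set.Icc c d ∧ b ∈ Tm {a | t < x a}} : Set ℝ) := by
          intro b
          refine ⟨d, ?_⟩
          rintro r (rfl | hr)
          · exact hcd
          · exact hr.1.2
        have hxbm : ∀ b, xbs b ∈ Set.Icc c d := by
          intro b
          constructor
          · exact le_csSup (hsetbdd b) (Or.inl rfl)
          · apply csSup_le (hsetne b)
            rintro r (rfl | hr)
            · exact hcd
            · exact hr.1.2
        have hlevel : ∀ t, t ∈ Set.Ioo c d → {b | t < xbs b} = Tm {a | t < x a} := by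
          intro t ht
          ext b
          simp only [Set.mem_setOf_eq, hxbs]
          constructor
          · intro hlt
            obtain ⟨r, hr, htr⟩ := exists_lt_of_lt_csSup (hsetne b) hlt
            rcases hr with rfl | hr
            · exact absurd htr (not_lt.2 (le_of_lt ht.1))
            · have hsub' : {a | r < x a} ⊆ {a | t < x a} :=
                fun a ha => lt_trans htr ha
              exact hTmono _ _ hsub' hr.2
          · intro hb
            have hne : ∃ a, t < x a := by
              by_contra hcon
              push_neg at hcon
              exact absurd ht.2 (not_lt.2 (ciSup_le hcon))
            obtain ⟨aw, haw⟩ := hne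
            have hPne : ((Finset.univ.filter (fun a => t < x a)).image x).Nonempty :=
              ⟨x aw, Finset.mem_image.2 ⟨aw,
                Finset.mem_filter.2 ⟨Finset.mem_univ _, haw⟩, rfl⟩⟩
            obtain ⟨aM, haM, haMx⟩ := Finset.mem_image.1
              (((Finset.univ.filter (fun a => t < x a)).image x).min'_mem hPne)
            have htm : t < x aM := (Finset.mem_filter.1 haM).2
            have hmd : x aM ≤ d := (hxm aM).2
            have hminle : ∀ a, t < x a → x aM ≤ x a := by
              intro a ha
              rw [haMx]
              exact Finset.min'_le _ _ (Finset.mem_image.2 ⟨a,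
                Finset.mem_filter.2 ⟨Finset.mem_univ _, ha⟩, rfl⟩)
            set t' := (t + x aM) / 2 with ht'
            have htt' : t < t' := by rw [ht']; linarith
            have ht'm : t' < x aM := by rw [ht']; linarith
            have hSeq : {a | t' < x a} = {a | t < x a} := by
              ext a
              simp only [Set.mem_setOf_eq]
              constructor
              · exact fun h => lt_trans htt' h
              · intro h
                exact lt_of_lt_of_le ht'm (hminle a h)
            have ht'mem : t' ∈ ({c} ∪ {s | s ∈ Set.Icc c d ∧ b ∈ Tm {a | s < x a}} : Set ℝ) := by
              refine Or.inr ⟨⟨?_, ?_⟩, ?_⟩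
              · exact le_trans (le_of_lt ht.1) (le_of_lt htt')
              · exact le_trans (le_of_lt ht'm) hmd
              · rw [hSeq]; exact hb
            exact lt_of_lt_of_le htt' (le_csSup (hsetbdd b) ht'mem)
        have hlevE : ∀ i, Sum.elim x xbs i ∈ Set.Icc c d := by
          intro i
          cases i with
          | inl a => exact hxm a
          | inr b => exact hxbm b
        have hcong : ∀ᵐ t : ℝ, t ∈ Set.Ioc c d →
            cutG {i | t < Sum.elim x xbs i} = cutH {a | t < x a} := by
          filter_upwards [ae_ne_real d] with t htd ht
          have htIoo : t ∈ Set.Ioo c d := ⟨ht.1, lt_of_le_of_ne ht.2 htd⟩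
          rw [level_elim, hlevel t htIoo, hcut {a | t < x a}]
          exact le_antisymm (le_ciInf (hTm1 _)) (ciInf_le (hbddG _) _)
        calc (⨅ xb : β → ℝ, Q1g (Sum.elim x xb)) ≤ Q1g (Sum.elim x xbs) :=
              ciInf_le (hbddQ x) xbs
          _ = ∫ t in Set.Ioc c d, cutG {i | t < Sum.elim x xbs i} :=
              Qint c d _ hlevE
          _ = ∫ t in Set.Ioc c d, cutH {a | t < x a} :=
              MeasureTheory.setIntegral_congr_ae measurableSet_Ioc hcong
          _ = lovasz cutH x := hlov.symm
  · -- Lovász-level reduction implies cut-level reduction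
    intro hL S
    have h1 : cutH S = ⨅ xb : β → ℝ,
        Q1g (Sum.elim (fun a => if a ∈ S then (1:ℝ) else 0) xb) := by
      rw [← hL]
      exact (lovasz_indicator cutH hHe hHu S).symm
    rw [h1]
    apply le_antisymm
    · apply le_ciInf
      intro T
      calc (⨅ xb : β → ℝ, Q1g (Sum.elim (fun a => if a ∈ S then (1:ℝ) else 0) xb))
          ≤ Q1g (Sum.elim (fun a => if a ∈ S then (1:ℝ) else 0)
              (fun b => if b ∈ T then (1:ℝ) else 0)) := ciInf_le (hbddQ _) _
        _ = cutG (Sum.inl '' S ∪ Sum.inr '' T) := Qind S T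
    · apply le_ciInf
      intro xb
      set m := ⨅ T : Set β, cutG (Sum.inl '' S ∪ Sum.inr '' T) with hm
      set xb' : β → ℝ := fun b => clampTo 0 1 (xb b) with hxb'
      set y' : (α ⊕ β) → ℝ := Sum.elim (fun a => if a ∈ S then (1:ℝ) else 0) xb'
        with hy'
      have hy'c : y' = fun i => clampTo 0 1
          (Sum.elim (fun a => if a ∈ S then (1:ℝ) else 0) xb i) := by
        funext i
        cases i with
        | inl a =>
          by_cases h : a ∈ S <;>
            simp [hy', hxb', h, clampTo_of_mem, Set.mem_Icc, zero_le_one]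
        | inr b => rfl
      have hy'm : ∀ i, y' i ∈ Set.Icc (0:ℝ) 1 := by
        intro i
        cases i with
        | inl a =>
          by_cases h : a ∈ S <;> simp [hy', h, Set.mem_Icc, zero_le_one]
        | inr b => exact clampTo_mem 0 1 zero_le_one _
      have step1 : m ≤ Q1g y' := by
        rw [Qint 0 1 y' hy'm]
        have hconst : (∫ _ in Set.Ioc (0:ℝ) 1, m) = m := by
          rw [setIntegral_const, measureReal_def, Real.volume_Ioc]
          norm_num
        rw [← hconst]
        apply setIntegral_mono_on_ae (integrableOn_const measure_Ioc_lt_top.ne enorm_ne_top)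
          (level_integrableOn cutG y' 0 1) measurableSet_Ioc
        filter_upwards [ae_ne_real 1] with t ht1 ht
        have hS' : {a : α | t < (if a ∈ S then (1:ℝ) else 0)} = S := by
          ext a
          by_cases h : a ∈ S <;>
            simp [h, lt_of_le_of_ne ht.2 ht1, not_lt.2 (le_of_lt ht.1)]
        have hlev : {i | t < y' i} = Sum.inl '' S ∪ Sum.inr '' {b | t < xb' b} := by
          rw [hy', level_elim, hS']
        rw [hlev]
        exact ciInf_le (hbddG S) _
      have step2 : Q1g y' ≤ Q1g (Sum.elim (fun a => if a ∈ S then (1:ℝ) else 0) xb) := by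
        rw [hy'c]
        exact clampQ 0 1 _
      exact le_trans step1 step2
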